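/- Let φ be a balanced s-model of a finite tree T with maximum degree at most 4, and let P be a leaf-to-leaf path of T with exactly k ≥ 1 bends in φ, bending at the vertices v_1,…,v_k listed in order along P. Then every v_i has degree at least 3 in T, and for each 1 ≤ i ≤ k there exists a neighbor w_i of v_i, distinct from both neighbors of v_i on P, with b^ℓ_φ(v_i,w_i) ≥ min{i − 1, k − i}. -/

import Mathlib

open SimpleGraph

/-- The closed axis-parallel grid segment (bounding box) with corners `p` and `q`.
For axis-aligned `p`, `q` this is exactly the straight segment joining them. -/
def seg (p q : ℤ × ℤ) : Set (ℤ × ℤ) :=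
  {r | r.1 ∈ Set.uIcc p.1 q.1 ∧ r.2 ∈ Set.uIcc p.2 q.2}

/-- A straight model (s-model) of a graph `G`: an injective drawing of the vertices on the
grid `ℤ × ℤ` such that every edge is a horizontal or vertical straight segment, and segments
of distinct edges meet only at the image of a common endpoint. -/
structure SModel {V : Type*} (G : SimpleGraph V) where
  toFun : V → ℤ × ℤ
  inj : Function.Injective toFun
  axisAligned : ∀ ⦃u v : V⦄, G.Adj u v →
    ((toFun u).1 = (toFun v).1 ∧ (toFun u).2 ≠ (toFun v).2) ∨
    ((toFun u).2 = (toFun v).2 ∧ (toFun u).1 ≠ (toFun v).1)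
  noCross : ∀ ⦃u v x y : V⦄, G.Adj u v → G.Adj x y → s(u, v) ≠ s(x, y) →
    ∀ r ∈ seg (toFun u) (toFun v) ∩ seg (toFun x) (toFun y),
      ∃ w : V, (w = u ∨ w = v) ∧ (w = x ∨ w = y) ∧ toFun w = r

/-- The drawing `φ` bends at `b` when passing `a, b, c`: one of the two segments is
vertical and the other horizontal. -/
def bendAt {V : Type*} (φ : V → ℤ × ℤ) (a b c : V) : Prop :=
  ((φ a).1 = (φ b).1 ∧ (φ b).2 = (φ c).2) ∨
  ((φ a).2 = (φ b).2 ∧ (φ b).1 = (φ c).1)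

instance {V : Type*} (φ : V → ℤ × ℤ) (a b c : V) : Decidable (bendAt φ a b c) := by
  unfold bendAt; infer_instance

/-- The list of internal vertices, in order, at which the drawing of the given vertex list
bends. -/
def bendVertices {V : Type*} (φ : V → ℤ × ℤ) : List V → List V
  | a :: b :: c :: rest =>
      (if bendAt φ a b c then [b] else []) ++ bendVertices φ (b :: c :: rest)
  | _ => []

/-- The number of bends of (the drawing of) a vertex list. -/
def bends {V : Type*} (φ : V → ℤ × ℤ) (L : List V) : ℕ :=
  (bendVertices φ L).length

section Defs

variable {V : Type*} [Fintype V]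

/-- `b(φ)`: the maximum number of bends over all leaf-to-leaf paths (0 if there are none). -/
noncomputable def bendNum {G : SimpleGraph V} [DecidableRel G.Adj] (M : SModel G) : ℕ :=
  sSup {n | ∃ (a b : V) (W : G.Walk a b), W.IsPath ∧ G.degree a = 1 ∧ G.degree b = 1 ∧
    bends M.toFun W.support = n}

/-- `b(T)`: the minimum of `b(φ)` over all s-models `φ`. -/
noncomputable def treeBendNum (G : SimpleGraph V) [DecidableRel G.Adj] : ℕ :=
  sInf {n | ∃ M : SModel G, bendNum M = n}

/-- `b^ℓ_φ(p, v)`: the maximum number of bends over all paths from `p` to a leaf that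
contain `v`. -/
noncomputable def leafBend {G : SimpleGraph V} [DecidableRel G.Adj] (M : SModel G)
    (p v : V) : ℕ :=
  sSup {n | ∃ (f : V) (W : G.Walk p f), W.IsPath ∧ G.degree f = 1 ∧ v ∈ W.support ∧
    bends M.toFun W.support = n}

/-- `b^ℓ_T(p, v)`: the minimum of `b^ℓ_φ(p, v)` over all s-models `φ`. -/
noncomputable def leafBendMin (G : SimpleGraph V) [DecidableRel G.Adj] (p v : V) : ℕ :=
  sInf {n | ∃ M : SModel G, leafBend M p v = n}

/-- `b_φ(v)`: the maximum number of bends over all leaf-to-leaf paths containing `v`. -/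
noncomputable def bendNumAt {G : SimpleGraph V} [DecidableRel G.Adj] (M : SModel G)
    (v : V) : ℕ :=
  sSup {n | ∃ (a b : V) (W : G.Walk a b), W.IsPath ∧ G.degree a = 1 ∧ G.degree b = 1 ∧
    v ∈ W.support ∧ bends M.toFun W.support = n}

/-- `p`, `q`, `r` lie on a common horizontal or vertical grid line. -/
def collinearGrid (p q r : ℤ × ℤ) : Prop :=
  (p.1 = q.1 ∧ q.1 = r.1) ∨ (p.2 = q.2 ∧ q.2 = r.2)

/-- `v` is balanced in the s-model `M`: either it has degree at most 1, or two neighbors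
realizing the two largest values of `b^ℓ_M(v, ·)` are drawn collinearly with `v`. -/
def BalancedAt {G : SimpleGraph V} [DecidableRel G.Adj] (M : SModel G) (v : V) : Prop :=
  G.degree v ≤ 1 ∨
  ∃ u1 u2 : V, u1 ≠ u2 ∧ G.Adj v u1 ∧ G.Adj v u2 ∧
    collinearGrid (M.toFun u1) (M.toFun v) (M.toFun u2) ∧
    ∀ w : V, G.Adj v w → w ≠ u1 → w ≠ u2 →
      leafBend M v w ≤ min (leafBend M v u1) (leafBend M v u2)

/-- The value `b^ℓ_M(v, u)` of a real or virtual (`none`) neighbor `u` of `v`; virtual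
neighbors have value `-1`. -/
noncomputable def optVal {G : SimpleGraph V} [DecidableRel G.Adj] (M : SModel G) (v : V) :
    Option V → ℤ
  | none => -1
  | some u => (leafBend M v u : ℤ)

/-- `u1` and `u2` are the first two entries of a nonincreasing (w.r.t. `b^ℓ_M(v, ·)`)
ordering of the real neighbors of `v` other than `p`, padded at the end with virtual
neighbors `none`. -/
def TopTwo {G : SimpleGraph V} [DecidableRel G.Adj] (M : SModel G) (p v : V) :
    Option V → Option V → Prop
  | none, u2 => u2 = none ∧ ∀ w, G.Adj v w → w = p
  | some a, none => G.Adj v a ∧ a ≠ p ∧ ∀ w, G.Adj v w → w ≠ p → w = a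
  | some a, some b => G.Adj v a ∧ a ≠ p ∧ G.Adj v b ∧ b ≠ p ∧ a ≠ b ∧
      leafBend M v b ≤ leafBend M v a ∧
      ∀ w, G.Adj v w → w ≠ p → w ≠ a → w ≠ b → leafBend M v w ≤ leafBend M v b

/-- Criticality of an ordered pair in an s-model `M`: every pair `(p, ∅)` is critical, and an
ordered edge `(p, v)` is critical if, for the first two entries `u1, u2` of some nonincreasing
ordering of the other neighbors of `v`, either `b^ℓ_M(p,v) = b^1` and `(v, u1)` is critical, or
`b^ℓ_M(p,v) = b^2 + 1` and both `(v, u1)` and `(v, u2)` are critical. -/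
inductive Critical {G : SimpleGraph V} [DecidableRel G.Adj] (M : SModel G) :
    V → Option V → Prop
  | base (p : V) : Critical M p none
  | top1 (p v : V) (u1 u2 : Option V) (hadj : G.Adj p v)
      (htop : TopTwo M p v u1 u2)
      (hb : (leafBend M p v : ℤ) = optVal M v u1)
      (hc : Critical M v u1) : Critical M p (some v)
  | top2 (p v : V) (u1 u2 : Option V) (hadj : G.Adj p v)
      (htop : TopTwo M p v u1 u2)
      (hb : (leafBend M p v : ℤ) = optVal M v u2 + 1)
      (hc1 : Critical M v u1) (hc2 : Critical M v u2) : Critical M p (some v)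

end Defs

/-- Membership in the class of trees of the statement: a tree with maximum degree at most 4
having a vertex `r` of degree exactly 2 with distinct neighbors `r1`, `r2`, admitting a
balanced s-model `M` with `b^ℓ_M(r,r1) = b^ℓ_M(r,r2) = k - 1`. -/
def ClassProp (k : ℕ) (V : Type) [Fintype V] (G : SimpleGraph V)
    [DecidableRel G.Adj] : Prop :=
  G.IsTree ∧ (∀ v, G.degree v ≤ 4) ∧
  ∃ (r r1 r2 : V) (M : SModel G),
    G.degree r = 2 ∧ G.Adj r r1 ∧ G.Adj r r2 ∧ r1 ≠ r2 ∧
    (∀ v, BalancedAt M v) ∧ leafBend M r r1 = k - 1 ∧ leafBend M r r2 = k - 1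

/-- The full binary tree of height `k`, with vertex set the lists over `Bool` of length at
most `k`, rooted at the empty list; children of `l` are the lists `c :: l`. -/
def fullBinTree (k : ℕ) : SimpleGraph {l : List Bool // l.length ≤ k} :=
  SimpleGraph.fromRel (fun a b => ∃ c : Bool, (b : List Bool) = c :: (a : List Bool))

/-- A tree with maximum degree at most 4 and minimum bend number `k`. -/
def TreeProp (k : ℕ) (V : Type) [Fintype V] (G : SimpleGraph V)
    [DecidableRel G.Adj] : Prop :=
  G.IsTree ∧ (∀ v, G.degree v ≤ 4) ∧ treeBendNum G = k

/-- The grid graph on `ℤ × ℤ`: two grid points are adjacent iff their distance is 1. -/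
def gridGraph : SimpleGraph (ℤ × ℤ) :=
  SimpleGraph.fromRel (fun p q =>
    (p.1 = q.1 ∧ (p.2 - q.2).natAbs = 1) ∨ (p.2 = q.2 ∧ (p.1 - q.1).natAbs = 1))

/-- `G` is a `B_k`-EPG graph: it has an EPG model by grid paths each with at most `k` bends;
distinct vertices are adjacent iff the corresponding grid paths share a grid edge. -/
def IsBkEPG {X : Type*} (G : SimpleGraph X) (k : ℕ) : Prop :=
  ∃ (s t : X → ℤ × ℤ) (P : ∀ x : X, gridGraph.Walk (s x) (t x)),
    (∀ x, (P x).IsPath) ∧ (∀ x, bends (id : ℤ × ℤ → ℤ × ℤ) (P x).support ≤ k) ∧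
    ∀ x y : X, x ≠ y → (G.Adj x y ↔ ∃ e, e ∈ (P x).edges ∧ e ∈ (P y).edges)

/-- `⟨T, (Q x)_{x}⟩` is a VPT model of `G`: the `Q x` are pairwise distinct paths of the host
tree `T`, and distinct vertices of `G` are adjacent iff their paths share a vertex of `T`. -/
def IsVPTModel {X W : Type*} (G : SimpleGraph X) (T : SimpleGraph W)
    (s t : X → W) (Q : ∀ x : X, T.Walk (s x) (t x)) : Prop :=
  (∀ x, (Q x).IsPath) ∧
  (∀ x y : X, x ≠ y → {w : W | w ∈ (Q x).support} ≠ {w : W | w ∈ (Q y).support}) ∧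
  (∀ x y : X, x ≠ y → (G.Adj x y ↔ ∃ w : W, w ∈ (Q x).support ∧ w ∈ (Q y).support))

/-- A host tree with maximum degree at most 3 and minimum bend number `k`. -/
def HostProp (k : ℕ) (W : Type) [Fintype W] (T : SimpleGraph W)
    [DecidableRel T.Adj] : Prop :=
  T.IsTree ∧ (∀ v, T.degree v ≤ 3) ∧ treeBendNum T = k


section Aux

variable {V : Type*} (φ : V → ℤ × ℤ)

lemma bendAt_symm {a b c : V} : bendAt φ a b c ↔ bendAt φ c b a := by
  unfold bendAt; constructor <;> rintro (⟨h1, h2⟩ | ⟨h1, h2⟩)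
  · exact Or.inr ⟨h2.symm, h1.symm⟩
  · exact Or.inl ⟨h2.symm, h1.symm⟩
  · exact Or.inr ⟨h2.symm, h1.symm⟩
  · exact Or.inl ⟨h2.symm, h1.symm⟩

lemma bendVertices_length_le : ∀ (L : List V), (bendVertices φ L).length ≤ L.length
  | a :: b :: c :: R => by
    have := bendVertices_length_le (b :: c :: R)
    simp only [bendVertices, List.length_append, List.length_cons]
    split <;> simp_all <;> omega
  | [] => by simp [bendVertices]
  | [a] => by simp [bendVertices]
  | [a, b] => by simp [bendVertices]

lemma bendVertices_append : ∀ (A : List V) (x y : V) (B : List V),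
    bendVertices φ (A ++ x :: y :: B) =
      bendVertices φ (A ++ [x, y]) ++ bendVertices φ (x :: y :: B)
  | [], x, y, B => by simp [bendVertices]
  | [a], x, y, B => by simp [bendVertices]
  | a :: a' :: A', x, y, B => by
    have IH := bendVertices_append (a' :: A') x y B
    cases A' with
    | nil => simp [bendVertices, List.append_assoc]
    | cons a'' A'' =>
      simp only [List.cons_append, bendVertices, List.append_eq] at IH ⊢
      rw [IH, List.append_assoc]

lemma bends_reverse : ∀ (L : List V),
    (bendVertices φ L.reverse).length = (bendVertices φ L).length
  | a :: b :: c :: R => by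
    have IH := bends_reverse (b :: c :: R)
    have h1 : (a :: b :: c :: R).reverse = R.reverse ++ c :: b :: [a] := by simp
    have h2 : (b :: c :: R).reverse = R.reverse ++ [c, b] := by simp
    rw [h1, bendVertices_append φ R.reverse c b [a], ← h2]
    simp only [List.length_append, IH, bendVertices]
    by_cases h : bendAt φ a b c
    · rw [if_pos h, if_pos ((bendAt_symm φ).mp h)]; simp [Nat.add_comm]
    · rw [if_neg h, if_neg (fun hc => h ((bendAt_symm φ).mp hc))]; simp
  | [] => by simp [bendVertices]
  | [a] => by simp [bendVertices]
  | [a, b] => by simp [bendVertices]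

lemma bendVertices_split : ∀ (L : List V) (i : ℕ) (h : i < (bendVertices φ L).length)
    (v : V), (bendVertices φ L)[i] = v →
    ∃ A x y B, L = A ++ x :: v :: y :: B ∧ bendAt φ x v y ∧
      (bendVertices φ (v :: y :: B)).length = (bendVertices φ L).length - i - 1
  | a :: b :: c :: R, i, h, v, hv => by
    by_cases hb : bendAt φ a b c
    · have he : bendVertices φ (a :: b :: c :: R) = b :: bendVertices φ (b :: c :: R) := by
        simp [bendVertices, hb]
      match i with
      | 0 =>
        simp only [he] at hv
        simp only [List.getElem_cons_zero] at hv
        subst hv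
        exact ⟨[], a, c, R, by simp, hb, by rw [he]; simp⟩
      | Nat.succ j =>
        simp only [he] at hv h
        simp only [List.getElem_cons_succ] at hv
        simp only [List.length_cons] at h
        have hj : j < (bendVertices φ (b :: c :: R)).length := by omega
        obtain ⟨A', x', y', B', hdec, hbend, hsuf⟩ :=
          bendVertices_split (b :: c :: R) j hj v hv
        refine ⟨a :: A', x', y', B', by simp [hdec], hbend, ?_⟩
        rw [he]; simp only [List.length_cons]; omega
    · have he : bendVertices φ (a :: b :: c :: R) = bendVertices φ (b :: c :: R) := by
        simp [bendVertices, hb]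
      simp only [he] at hv h
      obtain ⟨A', x', y', B', hdec, hbend, hsuf⟩ :=
        bendVertices_split (b :: c :: R) i h v hv
      exact ⟨a :: A', x', y', B', by simp [hdec], hbend, by rw [he]; exact hsuf⟩
  | [], i, h, v, hv => by simp [bendVertices] at h
  | [a], i, h, v, hv => by simp [bendVertices] at h
  | [a, b], i, h, v, hv => by simp [bendVertices] at h

lemma bendVertices_split' (L : List V) (i : ℕ) (h : i < (bendVertices φ L).length)
    (v : V) (hv : (bendVertices φ L)[i] = v) :
    ∃ A x y B, L = A ++ x :: v :: y :: B ∧ bendAt φ x v y ∧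
      (bendVertices φ (A ++ [x, v])).length = i ∧
      (bendVertices φ (v :: y :: B)).length = (bendVertices φ L).length - i - 1 := by
  obtain ⟨A, x, y, B, hdec, hbend, hsuf⟩ := bendVertices_split φ L i h v hv
  refine ⟨A, x, y, B, hdec, hbend, ?_, hsuf⟩
  have h1 : bendVertices φ L = bendVertices φ (A ++ [x, v]) ++
      bendVertices φ (x :: v :: y :: B) := by
    rw [hdec]; exact bendVertices_append φ A x v (y :: B)
  have h2 : bendVertices φ (x :: v :: y :: B) = v :: bendVertices φ (v :: y :: B) := by
    simp [bendVertices, hbend]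
  have := congrArg List.length h1
  rw [h2] at this
  simp only [List.length_append, List.length_cons] at this
  omega

lemma triple_pos (s t : List V) (x v y : V) :
    (s ++ [x, v, y] ++ t)[s.length]? = some x ∧
    (s ++ [x, v, y] ++ t)[s.length + 1]? = some v ∧
    (s ++ [x, v, y] ++ t)[s.length + 2]? = some y := by
  refine ⟨?_, ?_, ?_⟩ <;>
  · rw [List.append_assoc, List.getElem?_append_right (by omega)]
    simp

lemma infix_triple_unique {L : List V} (hN : L.Nodup) {x v y x' y' : V}
    (h1 : [x, v, y] <:+: L) (h2 : [x', v, y'] <:+: L) : x = x' ∧ y = y' := by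
  obtain ⟨s, t, e⟩ := h1
  obtain ⟨s', t', e'⟩ := h2
  obtain ⟨hx, hv, hy⟩ := triple_pos s t x v y
  obtain ⟨hx', hv', hy'⟩ := triple_pos s' t' x' v y'
  rw [e] at hx hv hy
  rw [e'] at hx' hv' hy'
  have hlen : s.length + 1 < L.length := by
    by_contra hc
    rw [List.getElem?_eq_none (by omega)] at hv
    exact (Option.some_ne_none v hv.symm).elim
  have hss : s.length + 1 = s'.length + 1 :=
    (List.getElem?_inj hlen hN).mp (hv.trans hv'.symm)
  have hss' : s.length = s'.length := by omega
  rw [hss'] at hx hy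
  exact ⟨Option.some.inj (hx.symm.trans hx'), Option.some.inj (hy.symm.trans hy')⟩

end Aux

section GraphAux

open SimpleGraph

lemma adj_of_infix {V : Type*} {G : SimpleGraph V} {a b x v y : V} (W : G.Walk a b)
    (hinf : [x, v, y] <:+: W.support) : G.Adj x v ∧ G.Adj v y := by
  have hc := W.isChain_adj_support.infix hinf
  rw [List.isChain_cons_cons, List.isChain_cons_cons] at hc
  exact ⟨hc.1, hc.2.1⟩

lemma leafBend_ge {V : Type*} [Fintype V] {G : SimpleGraph V} [DecidableRel G.Adj]
    (M : SModel G) {v f w : V} (W' : G.Walk v f) (hP : W'.IsPath)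
    (hf : G.degree f = 1) (hw : w ∈ W'.support) :
    bends M.toFun W'.support ≤ leafBend M v w := by
  classical
  apply le_csSup
  · refine ⟨Fintype.card V, ?_⟩
    rintro n ⟨f', W'', hp, _, _, rfl⟩
    exact le_trans (bendVertices_length_le _ _) hp.support_nodup.length_le_card
  · exact ⟨f, W', hP, hf, hw, rfl⟩

lemma support_decomp {V : Type*} {G : SimpleGraph V} {a b v x : V} {A B : List V}
    (W : G.Walk a b) (hW : W.IsPath)
    (hsup : W.support = A ++ x :: v :: B) :
    ∃ (T : G.Walk a v) (D : G.Walk v b), T.IsPath ∧ D.IsPath ∧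
      T.support = A ++ [x, v] ∧ D.support = v :: B := by
  classical
  have hv : v ∈ W.support := by rw [hsup]; simp
  have hTD : (W.takeUntil v hv).support ++ (W.dropUntil v hv).support.tail
      = W.support := by
    conv_rhs => rw [← W.take_spec hv]
    rw [SimpleGraph.Walk.support_append]
  have hN : W.support.Nodup := hW.support_nodup
  have hne : (W.takeUntil v hv).support ≠ [] := (W.takeUntil v hv).support_ne_nil
  have hpre : W.support.take (W.takeUntil v hv).support.length
      = (W.takeUntil v hv).support := by
    rw [← hTD]; exact List.take_left
  have hlenpos : 1 ≤ (W.takeUntil v hv).support.length := List.length_pos_iff.mpr hne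
  have hnle : (W.takeUntil v hv).support.length ≤ W.support.length := by
    have := congrArg List.length hTD
    simp only [List.length_append] at this; omega
  have h1 : W.support[(W.takeUntil v hv).support.length - 1]? = some v := by
    rw [List.getElem?_eq_getElem (by omega)]
    have hgl : (W.takeUntil v hv).support.getLast hne = v :=
      (W.takeUntil v hv).getLast_support
    rw [List.getLast_eq_getElem] at hgl
    have e1 : (W.support.take (W.takeUntil v hv).support.length)[
        (W.takeUntil v hv).support.length - 1]'(by rw [List.length_take]; omega) = v := by
      simp only [hpre]; exact hgl
    rw [List.getElem_take] at e1
    rw [e1]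
  have h2 : W.support[A.length + 1]? = some v := by
    rw [hsup, List.getElem?_append_right (by omega)]
    simp
  have hEq : (W.takeUntil v hv).support.length - 1 = A.length + 1 :=
    (List.getElem?_inj (by omega) hN).mp (h1.trans h2.symm)
  have hn : (W.takeUntil v hv).support.length = A.length + 2 := by omega
  have hTs : (W.takeUntil v hv).support = A ++ [x, v] := by
    rw [← hpre, hn, hsup, List.take_append]
    simp
  have hDt : (W.dropUntil v hv).support.tail = B := by
    have h3 := hTD
    rw [hTs, hsup, List.append_assoc] at h3
    have h4 := List.append_cancel_left h3
    simp only [List.cons_append, List.nil_append, List.cons.injEq, true_and] at h4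
    exact h4
  refine ⟨W.takeUntil v hv, W.dropUntil v hv, hW.takeUntil hv, hW.dropUntil hv, hTs, ?_⟩
  rw [(W.dropUntil v hv).support_eq_cons, hDt]

lemma collinear_bend_false {V : Type*} {G : SimpleGraph V} (M : SModel G) {x v y : V}
    (hxv : G.Adj v x) (hvy : G.Adj v y)
    (hcol : collinearGrid (M.toFun x) (M.toFun v) (M.toFun y))
    (hbend : bendAt M.toFun x v y) : False := by
  have hx : M.toFun x ≠ M.toFun v := fun h => hxv.ne' (M.inj h)
  have hy : M.toFun y ≠ M.toFun v := fun h => hvy.ne' (M.inj h)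
  rcases hcol with ⟨h1, h2⟩ | ⟨h1, h2⟩ <;> rcases hbend with ⟨b1, b2⟩ | ⟨b1, b2⟩
  · exact hy (Prod.ext h2.symm b2.symm)
  · exact hx (Prod.ext h1 b1)
  · exact hx (Prod.ext b1 h1)
  · exact hy (Prod.ext b2.symm h2.symm)

lemma deg3 {V : Type*} [Fintype V] {G : SimpleGraph V} [DecidableRel G.Adj]
    {v x y w : V} (hx : G.Adj v x) (hy : G.Adj v y) (hw : G.Adj v w)
    (h1 : x ≠ y) (h2 : w ≠ x) (h3 : w ≠ y) : 3 ≤ G.degree v := by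
  classical
  have hsub : ({x, y, w} : Finset V) ⊆ G.neighborFinset v := by
    intro z hz
    simp only [Finset.mem_insert, Finset.mem_singleton] at hz
    rcases hz with rfl | rfl | rfl <;> simpa [SimpleGraph.mem_neighborFinset]
  have hcard : ({x, y, w} : Finset V).card = 3 := by
    rw [Finset.card_insert_of_notMem (by simp [h1, h2.symm, Ne.symm]),
      Finset.card_insert_of_notMem (by simp [h3.symm, Ne.symm]),
      Finset.card_singleton]
  calc 3 = ({x, y, w} : Finset V).card := hcard.symm
    _ ≤ (G.neighborFinset v).card := Finset.card_le_card hsub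
    _ = G.degree v := G.card_neighborFinset_eq_degree v

lemma balanced_key {V : Type*} [Fintype V] {G : SimpleGraph V} [DecidableRel G.Adj]
    (M : SModel G) (hbal : ∀ z, BalancedAt M z) {x v y : V} (hxv : G.Adj v x)
    (hvy : G.Adj v y) (hxy : x ≠ y) (hbend : bendAt M.toFun x v y) :
    3 ≤ G.degree v ∧ ∃ w, G.Adj v w ∧ w ≠ x ∧ w ≠ y ∧
      min (leafBend M v x) (leafBend M v y) ≤ leafBend M v w := by
  classical
  have hdeg2 : 2 ≤ G.degree v := by
    have hsub : ({x, y} : Finset V) ⊆ G.neighborFinset v := by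
      intro z hz
      simp only [Finset.mem_insert, Finset.mem_singleton] at hz
      rcases hz with rfl | rfl <;> simpa [SimpleGraph.mem_neighborFinset]
    calc 2 = ({x, y} : Finset V).card := (Finset.card_pair hxy).symm
      _ ≤ (G.neighborFinset v).card := Finset.card_le_card hsub
      _ = G.degree v := G.card_neighborFinset_eq_degree v
  rcases hbal v with h1 | ⟨u1, u2, hu12, hvu1, hvu2, hcol, hmax⟩
  · omega
  have hnotboth : ¬(x = u1 ∧ y = u2) := by
    rintro ⟨rfl, rfl⟩; exact collinear_bend_false M hxv hvy hcol hbend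
  have hnotboth' : ¬(x = u2 ∧ y = u1) := by
    rintro ⟨rfl, rfl⟩
    exact collinear_bend_false M hvy hxv hcol ((bendAt_symm _).mp hbend)
  by_cases hx1 : x = u1
  · have hyu1 : y ≠ u1 := fun h => hxy (hx1.trans h.symm)
    have hyu2 : y ≠ u2 := fun h => hnotboth ⟨hx1, h⟩
    have hwx : u2 ≠ x := fun h => hu12 (h ▸ hx1).symm
    refine ⟨deg3 hxv hvy hvu2 hxy hwx (Ne.symm hyu2), u2, hvu2, hwx, Ne.symm hyu2, ?_⟩
    exact le_trans (min_le_right _ _)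
      (le_trans (hmax y hvy hyu1 hyu2) (min_le_right _ _))
  · by_cases hy1 : y = u1
    · have hxu2 : x ≠ u2 := fun h => hnotboth' ⟨h, hy1⟩
      have hwy : u2 ≠ y := fun h => hu12 (h ▸ hy1).symm
      refine ⟨deg3 hxv hvy hvu2 hxy (Ne.symm hxu2) hwy, u2, hvu2, Ne.symm hxu2, hwy, ?_⟩
      exact le_trans (min_le_left _ _)
        (le_trans (hmax x hxv hx1 hxu2) (min_le_right _ _))
    · by_cases hx2 : x = u2
      · have hyu2 : y ≠ u2 := fun h => hxy (hx2.trans h.symm)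
        have hwx : u1 ≠ x := fun h => hu12 (h ▸ hx2)
        refine ⟨deg3 hxv hvy hvu1 hxy hwx (Ne.symm hy1), u1, hvu1, hwx, Ne.symm hy1, ?_⟩
        exact le_trans (min_le_right _ _)
          (le_trans (hmax y hvy hy1 hyu2) (min_le_left _ _))
      · refine ⟨deg3 hxv hvy hvu1 hxy (Ne.symm hx1) (Ne.symm hy1),
          u1, hvu1, Ne.symm hx1, Ne.symm hy1, ?_⟩
        exact le_trans (min_le_left _ _)
          (le_trans (hmax x hxv hx1 hx2) (min_le_left _ _))

end GraphAux

theorem stmt_13 {V : Type*} [Fintype V] (G : SimpleGraph V) [DecidableRel G.Adj]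
    (hT : G.IsTree) (hdeg : ∀ v, G.degree v ≤ 4) (M : SModel G)
    (hbal : ∀ x, BalancedAt M x) (a b : V) (W : G.Walk a b) (hW : W.IsPath)
    (ha : G.degree a = 1) (hb : G.degree b = 1) (k : ℕ) (hk : 1 ≤ k)
    (hlen : (bendVertices M.toFun W.support).length = k) :
    (∀ u ∈ bendVertices M.toFun W.support, 3 ≤ G.degree u) ∧
    ∀ i : ℕ, ∀ hi : i < k, ∃ wi : V,
      G.Adj ((bendVertices M.toFun W.support).get ⟨i, by omega⟩) wi ∧
      (∀ x y : V,
        List.IsInfix [x, (bendVertices M.toFun W.support).get ⟨i, by omega⟩, y]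
          W.support → wi ≠ x ∧ wi ≠ y) ∧
      min i (k - 1 - i) ≤
        leafBend M ((bendVertices M.toFun W.support).get ⟨i, by omega⟩) wi := by
  classical
  have hN : W.support.Nodup := hW.support_nodup
  constructor
  · intro u hu
    obtain ⟨⟨i, hi⟩, rfl⟩ := List.mem_iff_get.mp hu
    obtain ⟨A, x, y, B, hdec, hbend, hpre, hsuf⟩ :=
      bendVertices_split' M.toFun W.support i hi _ rfl
    have hinf : [x, (bendVertices M.toFun W.support)[i], y] <:+: W.support :=
      ⟨A, B, by
        conv_rhs => rw [hdec]
        simp⟩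
    obtain ⟨hxv, hvy⟩ := adj_of_infix W hinf
    have hnd : List.Nodup [x, (bendVertices M.toFun W.support)[i], y] :=
      hN.sublist hinf.sublist
    have hxy : x ≠ y := by simp at hnd; tauto
    have h3 := (balanced_key M hbal hxv.symm hvy hxy hbend).1
    simpa [List.get_eq_getElem] using h3
  · intro i hi
    have hi' : i < (bendVertices M.toFun W.support).length := by omega
    obtain ⟨A, x, y, B, hdec, hbend, hpre, hsuf⟩ :=
      bendVertices_split' M.toFun W.support i hi' _ rfl
    have hinf : [x, (bendVertices M.toFun W.support)[i], y] <:+: W.support :=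
      ⟨A, B, by
        conv_rhs => rw [hdec]
        simp⟩
    obtain ⟨hxv, hvy⟩ := adj_of_infix W hinf
    have hnd : List.Nodup [x, (bendVertices M.toFun W.support)[i], y] :=
      hN.sublist hinf.sublist
    have hxy : x ≠ y := by simp at hnd; tauto
    obtain ⟨hdeg3, w, hvw, hwx, hwy, hmin⟩ :=
      balanced_key M hbal hxv.symm hvy hxy hbend
    obtain ⟨T, D, hTp, hDp, hTs, hDs⟩ := support_decomp W hW hdec
    have hbx : i ≤ leafBend M ((bendVertices M.toFun W.support)[i]) x := by
      have hle := leafBend_ge M T.reverse hTp.reverse ha (w := x)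
        (by simp [SimpleGraph.Walk.support_reverse, hTs])
      have hbends : bends M.toFun T.reverse.support = i := by
        simp only [bends, SimpleGraph.Walk.support_reverse]
        rw [bends_reverse, hTs]
        exact hpre
      rw [hbends] at hle
      exact hle
    have hby : k - 1 - i ≤ leafBend M ((bendVertices M.toFun W.support)[i]) y := by
      have hle := leafBend_ge M D hDp hb (w := y) (by simp [hDs])
      have hbends : bends M.toFun D.support = k - 1 - i := by
        simp only [bends, hDs]
        rw [hsuf, hlen]
        omega
      rw [hbends] at hle
      exact hle
    refine ⟨w, ?_, ?_, ?_⟩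
    · simpa [List.get_eq_getElem] using hvw
    · intro x' y' hinf'
      have heq := infix_triple_unique hN hinf
        (by simpa [List.get_eq_getElem] using hinf')
      exact ⟨heq.1 ▸ hwx, heq.2 ▸ hwy⟩
    · have hmm : min i (k - 1 - i) ≤
          min (leafBend M ((bendVertices M.toFun W.support)[i]) x)
            (leafBend M ((bendVertices M.toFun W.support)[i]) y) :=
        le_min (le_trans (min_le_left _ _) hbx) (le_trans (min_le_right _ _) hby)
      simpa [List.get_eq_getElem] using le_trans hmm hmin
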